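/- Let G be an ordered graph on [n] with m > 0 edges, and let S_L(n,m) be the ordered quasi-star graph with n vertices and m edges. Then the number of copies of the ordered left star S_L(k) in G is at most the number of copies of S_L(k) in S_L(n,m). -/

import Mathlib

open Finset

-- The right-degree of vertex `i` in an ordered graph on `Fin n`:
-- the number of neighbors `j` with `i < j`.
open scoped Classical in
noncomputable def rdeg {n : ℕ} (G : SimpleGraph (Fin n)) (i : Fin n) : ℕ :=
  (Finset.univ.filter fun j => G.Adj i j ∧ i < j).card

-- The number of copies of the ordered left star `S_L(k)` in an ordered graph on `Fin n`:
-- sets of `k+1` vertices whose minimum is adjacent to all the others.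
open scoped Classical in
noncomputable def leftStarCount {n : ℕ} (G : SimpleGraph (Fin n)) (k : ℕ) : ℕ :=
  ((Finset.univ : Finset (Finset (Fin n))).filter fun s =>
    s.card = k + 1 ∧ ∃ v ∈ s, (∀ w ∈ s, v ≤ w) ∧ ∀ w ∈ s, w ≠ v → G.Adj v w).card

-- The number of edges of an ordered graph on `Fin n`.
open scoped Classical in
noncomputable def ecount {n : ℕ} (G : SimpleGraph (Fin n)) : ℕ :=
  (Finset.univ.filter fun p : Fin n × Fin n => p.1 < p.2 ∧ G.Adj p.1 p.2).card

-- `f(n,a) = C(a,2) + a(n-a)`, the number of edges of the quasi-star with full part `[a]`.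
def quasiStarEdges (n a : ℕ) : ℕ := a.choose 2 + a * (n - a)

-- The ordered quasi-star `S_L(n,m)` (0-indexed): a complete graph on the first `a`
-- vertices joined to everything, plus `b` edges from vertex `a` to the next `b` vertices.
def quasiStar (n a b : ℕ) : SimpleGraph (Fin n) :=
  SimpleGraph.fromRel fun v w =>
    v.val < w.val ∧ (v.val < a ∨ (v.val = a ∧ w.val ≤ a + b))

/-! ### Auxiliary definitions and lemmas -/

/-- The greedy count: `Fgr k n m` is the number of left-star copies obtained by the
greedy (quasi-star) degree sequence with caps `n-1, n-2, ..., 0` and total `m`. -/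
private def Fgr (k : ℕ) : ℕ → ℕ → ℕ
  | 0, _ => 0
  | (n+1), m => (min m n).choose k + Fgr k n (m - n)

private lemma Fgr_zero (k : ℕ) (hk : 0 < k) : ∀ n, Fgr k n 0 = 0
  | 0 => rfl
  | (n+1) => by simp [Fgr, Nat.choose_eq_zero_of_lt hk, Fgr_zero k hk n]

private lemma choose_move {k : ℕ} (hk : 0 < k) {x y : ℕ} (hy : 0 < y) (hxy : y ≤ x + 1) :
    x.choose k + y.choose k ≤ (x+1).choose k + (y-1).choose k := by
  obtain ⟨k', rfl⟩ := Nat.exists_eq_succ_of_ne_zero hk.ne'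
  obtain ⟨y', rfl⟩ := Nat.exists_eq_succ_of_ne_zero hy.ne'
  have h1 : (x+1).choose (k'+1) = x.choose k' + x.choose (k'+1) := Nat.choose_succ_succ x k'
  have h2 : (y'+1).choose (k'+1) = y'.choose k' + y'.choose (k'+1) := Nat.choose_succ_succ y' k'
  have h3 : y'.choose k' ≤ x.choose k' := Nat.choose_le_choose k' (by omega)
  have h4 : y'.choose (k'+1) ≤ x.choose (k'+1) := Nat.choose_le_choose (k'+1) (by omega)
  simp only [Nat.succ_eq_add_one, Nat.succ_sub_one] at h1 h2 h3 h4 ⊢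
  omega

private lemma sum_upd1 (g d : ℕ → ℕ) (s : Finset ℕ) {j : ℕ} (hj : j ∈ s) (y : ℕ) :
    ∑ t ∈ s, g (Function.update d j y t) + g (d j)
      = ∑ t ∈ s, g (d t) + g y := by
  have h1 : (fun t => g (Function.update d j y t))
      = Function.update (fun t => g (d t)) j (g y) := by
    funext t
    rcases eq_or_ne t j with rfl | h
    · simp
    · simp [Function.update_apply, h]
  rw [h1, Finset.sum_update_of_mem hj]
  rw [Finset.sum_eq_sum_sdiff_singleton_add hj (fun t => g (d t))]
  omega

private lemma sum_upd2 (g d : ℕ → ℕ) (s : Finset ℕ) {i j : ℕ} (hi : i ∈ s) (hj : j ∈ s)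
    (hij : i ≠ j) (x y : ℕ) :
    ∑ t ∈ s, g (Function.update (Function.update d i x) j y t) + (g (d i) + g (d j))
      = ∑ t ∈ s, g (d t) + (g x + g y) := by
  have h1 := sum_upd1 g (Function.update d i x) s hj y
  have h2 : Function.update d i x j = d j := Function.update_of_ne (Ne.symm hij) x d
  have h3 := sum_upd1 g d s hi x
  rw [h2] at h1
  omega

/-- The key extremal lemma: any degree sequence `d` with `d i ≤ n - 1 - i` has
left-star count `∑ C(d i, k)` at most the greedy value `Fgr k n (∑ d i)`. -/
private lemma main_lem (k : ℕ) (hk : 0 < k) : ∀ n (d : ℕ → ℕ),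
    (∀ i, i < n → d i ≤ n - 1 - i) →
    ∑ i ∈ Finset.range n, (d i).choose k ≤ Fgr k n (∑ i ∈ Finset.range n, d i) := by
  intro n
  induction n with
  | zero => intro d _; simp [Fgr]
  | succ n ih =>
    suffices h : ∀ T (d : ℕ → ℕ), (∀ i, i < n+1 → d i ≤ n - i) →
        (∑ i ∈ Finset.range n, d (i+1)) ≤ T →
        ∑ i ∈ Finset.range (n+1), (d i).choose k
          ≤ Fgr k (n+1) (∑ i ∈ Finset.range (n+1), d i) by
      intro d hd
      exact h _ d (fun i hi => by simpa using hd i hi) le_rfl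
    intro T
    induction T with
    | zero =>
      intro d hd hT
      have htail : ∀ i ∈ Finset.range n, d (i+1) = 0 := by
        intro i hi
        exact (Finset.sum_eq_zero_iff.mp (Nat.le_zero.mp hT)) i hi
      have hd0 : d 0 ≤ n := by simpa using hd 0 (by omega)
      have h1 : ∑ i ∈ Finset.range n, (d (i+1)).choose k = 0 :=
        Finset.sum_eq_zero (fun i hi => by
          rw [htail i hi]; exact Nat.choose_eq_zero_of_lt hk)
      have h2 : ∑ i ∈ Finset.range n, d (i+1) = 0 := Finset.sum_eq_zero htail
      rw [Finset.sum_range_succ' (fun i => (d i).choose k) n,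
          Finset.sum_range_succ' d n, h1, h2]
      simp only [Fgr, zero_add]
      rw [min_eq_left hd0, Nat.sub_eq_zero_of_le hd0, Fgr_zero k hk]
      omega
    | succ T ihT =>
      intro d hd hT
      by_cases hT' : ∑ i ∈ Finset.range n, d (i+1) ≤ T
      · exact ihT d hd hT'
      have htail : ∑ i ∈ Finset.range n, d (i+1) = T + 1 := by omega
      by_cases hsat : d 0 = n
      · -- shift to the `n`-vertex problem
        have he : ∀ i, i < n → d (i+1) ≤ n - 1 - i := by
          intro i hi
          have := hd (i+1) (by omega)
          omega
        have hih := ih (fun i => d (i+1)) he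
        rw [Finset.sum_range_succ' (fun i => (d i).choose k) n,
            Finset.sum_range_succ' d n, hsat]
        simp only [Fgr]
        have hmin : min (∑ i ∈ Finset.range n, d (i+1) + n) n = n := by omega
        rw [hmin]
        have hsub : ∑ i ∈ Finset.range n, d (i+1) + n - n
            = ∑ i ∈ Finset.range n, d (i+1) := by omega
        rw [hsub]
        omega
      · -- d 0 < n
        have hd0 : d 0 < n := lt_of_le_of_ne (by simpa using hd 0 (by omega)) hsat
        have hpos : 0 < ∑ i ∈ Finset.range n, d (i+1) := by omega
        have hne : (Finset.range n).Nonempty := by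
          by_contra h
          rw [Finset.not_nonempty_iff_eq_empty.mp h] at hpos; simp at hpos
        obtain ⟨j, hjmem, hjmax⟩ := Finset.exists_max_image (Finset.range n)
          (fun i => d (i+1)) hne
        have hjn : j < n := Finset.mem_range.mp hjmem
        have hD : 0 < d (j+1) := by
          obtain ⟨i, hi, hdi⟩ : ∃ i ∈ Finset.range n, 0 < d (i+1) := by
            by_contra h
            push_neg at h
            have : ∑ i ∈ Finset.range n, d (i+1) = 0 :=
              Finset.sum_eq_zero (fun i hi => by have := h i hi; omega)
            omega
          exact lt_of_lt_of_le hdi (hjmax i hi)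
        have h0mem : (0:ℕ) ∈ Finset.range (n+1) := by simp
        have hjmem' : j + 1 ∈ Finset.range (n+1) := by simp; omega
        have hij : (0:ℕ) ≠ j + 1 := by omega
        have hcapj : d (j+1) ≤ n - (j+1) := hd (j+1) (by omega)
        by_cases hswap : d 0 < d (j+1)
        · -- swap d 0 and d (j+1)
          set d' := Function.update (Function.update d 0 (d (j+1))) (j+1) (d 0) with hd'
          have hsum := sum_upd2 id d (Finset.range (n+1)) h0mem hjmem' hij (d (j+1)) (d 0)
          have hsumC := sum_upd2 (fun x => x.choose k) d (Finset.range (n+1)) h0mem hjmem'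
            hij (d (j+1)) (d 0)
          have htaileq : ∀ i, d' (i+1) = Function.update (fun t => d (t+1)) j (d 0) i := by
            intro i
            rcases eq_or_ne i j with rfl | h
            · simp [hd']
            · simp [hd', Function.update_apply, h]
          have htail' := sum_upd1 id (fun t => d (t+1)) (Finset.range n) hjmem (d 0)
          have hts : ∑ i ∈ Finset.range n, d' (i+1)
              = ∑ i ∈ Finset.range n, Function.update (fun t => d (t+1)) j (d 0) i :=
            Finset.sum_congr rfl (fun i _ => htaileq i)
          have hcap' : ∀ i, i < n+1 → d' i ≤ n - i := by
            intro i hi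
            rcases eq_or_ne i (j+1) with rfl | h1
            · simp [hd']; omega
            · rcases eq_or_ne i 0 with rfl | h2
              · simp [hd', Function.update_apply, h1]; omega
              · simp [hd', Function.update_apply, h1, h2]; exact hd i hi
          simp only [id_eq] at htail' hsum hsumC
          rw [← hd'] at hsum hsumC
          have hTle : ∑ i ∈ Finset.range n, d' (i+1) ≤ T := by omega
          have hkey := ihT d' hcap' hTle
          have hsumeq : ∑ i ∈ Finset.range (n+1), d' i
              = ∑ i ∈ Finset.range (n+1), d i := by omega
          rw [← hsumeq]
          omega
        · -- move one unit from j+1 to 0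
          set d' := Function.update (Function.update d 0 (d 0 + 1)) (j+1) (d (j+1) - 1)
            with hd'
          have hsum := sum_upd2 id d (Finset.range (n+1)) h0mem hjmem' hij (d 0 + 1)
            (d (j+1) - 1)
          have hsumC := sum_upd2 (fun x => x.choose k) d (Finset.range (n+1)) h0mem hjmem'
            hij (d 0 + 1) (d (j+1) - 1)
          have hmove := choose_move hk hD (show d (j+1) ≤ d 0 + 1 by omega)
          have htaileq : ∀ i, d' (i+1)
              = Function.update (fun t => d (t+1)) j (d (j+1) - 1) i := by
            intro i
            rcases eq_or_ne i j with rfl | h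
            · simp [hd']
            · simp [hd', Function.update_apply, h]
          have htail' := sum_upd1 id (fun t => d (t+1)) (Finset.range n) hjmem (d (j+1) - 1)
          have hts : ∑ i ∈ Finset.range n, d' (i+1)
              = ∑ i ∈ Finset.range n, Function.update (fun t => d (t+1)) j (d (j+1) - 1) i :=
            Finset.sum_congr rfl (fun i _ => htaileq i)
          have hcap' : ∀ i, i < n+1 → d' i ≤ n - i := by
            intro i hi
            rcases eq_or_ne i (j+1) with rfl | h1
            · simp [hd']; omega
            · rcases eq_or_ne i 0 with rfl | h2
              · simp [hd', Function.update_apply, h1]; omega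
              · simp [hd', Function.update_apply, h1, h2]; exact hd i hi
          simp only [id_eq] at htail' hsum hsumC
          rw [← hd'] at hsum hsumC
          have hTle : ∑ i ∈ Finset.range n, d' (i+1) ≤ T := by omega
          have hkey := ihT d' hcap' hTle
          have hsumeq : ∑ i ∈ Finset.range (n+1), d' i
              = ∑ i ∈ Finset.range (n+1), d i := by omega
          rw [← hsumeq]
          omega

private lemma rdeg_le {n : ℕ} (G : SimpleGraph (Fin n)) (v : Fin n) :
    rdeg G v ≤ n - 1 - v.val := by
  classical
  rw [rdeg, ← Fin.card_Ioi v]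
  apply Finset.card_le_card
  intro j hj
  simp only [Finset.mem_filter] at hj
  exact Finset.mem_Ioi.mpr hj.2.2

private lemma ecount_eq {n : ℕ} (G : SimpleGraph (Fin n)) :
    ecount G = ∑ v : Fin n, rdeg G v := by
  classical
  rw [ecount]
  rw [Finset.card_eq_sum_card_fiberwise
    (f := Prod.fst) (t := Finset.univ) (fun x _ => Finset.mem_univ _)]
  refine Finset.sum_congr rfl fun v _ => ?_
  rw [rdeg]
  apply Finset.card_bij (fun p _ => p.2)
  · intro p hp
    simp only [Finset.mem_filter, Finset.mem_univ, true_and] at hp ⊢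
    obtain ⟨⟨h1, h2⟩, h3⟩ := hp
    subst h3
    exact ⟨h2, h1⟩
  · intro p hp q hq h
    simp only [Finset.mem_filter] at hp hq
    exact Prod.ext (hp.2.trans hq.2.symm) h
  · intro j hj
    simp only [Finset.mem_filter, Finset.mem_univ, true_and] at hj ⊢
    exact ⟨(v, j), ⟨⟨hj.2, hj.1⟩, rfl⟩, rfl⟩

private lemma star_eq {n : ℕ} (G : SimpleGraph (Fin n)) (k : ℕ) :
    leftStarCount G k = ∑ v : Fin n, (rdeg G v).choose k := by
  classical
  rw [leftStarCount]
  have hset : ((Finset.univ : Finset (Finset (Fin n))).filter fun s =>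
      s.card = k + 1 ∧ ∃ v ∈ s, (∀ w ∈ s, v ≤ w) ∧ ∀ w ∈ s, w ≠ v → G.Adj v w)
      = (Finset.univ.sigma fun v : Fin n =>
          (Finset.univ.filter fun w => G.Adj v w ∧ v < w).powersetCard k).image
        fun p => insert p.1 p.2 := by
    ext s
    simp only [Finset.mem_filter, Finset.mem_univ, true_and, Finset.mem_image,
      Finset.mem_sigma, Finset.mem_powersetCard]
    constructor
    · rintro ⟨hcard, v, hv, hmin, hadj⟩
      refine ⟨⟨v, s.erase v⟩, ⟨⟨?_, ?_⟩, ?_⟩⟩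
      · intro w hw
        simp only [Finset.mem_erase] at hw
        simp only [Finset.mem_filter, Finset.mem_univ, true_and]
        exact ⟨hadj w hw.2 hw.1, lt_of_le_of_ne (hmin w hw.2) (Ne.symm hw.1)⟩
      · rw [Finset.card_erase_of_mem hv, hcard]; rfl
      · exact Finset.insert_erase hv
    · rintro ⟨⟨v, t⟩, ⟨ht, hcard⟩, rfl⟩
      simp only at ht hcard ⊢
      have hvt : v ∉ t := fun h => by
        have := ht h
        simp only [Finset.mem_filter] at this
        exact absurd this.2.2 (lt_irrefl v)
      have hlt : ∀ w ∈ t, v < w := fun w hw => by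
        have := ht hw
        simp only [Finset.mem_filter] at this
        exact this.2.2
      refine ⟨by rw [Finset.card_insert_of_notMem hvt, hcard], v,
        Finset.mem_insert_self v t, ?_, ?_⟩
      · intro w hw
        rcases Finset.mem_insert.mp hw with rfl | hw
        · exact le_refl w
        · exact le_of_lt (hlt w hw)
      · intro w hw hne
        rcases Finset.mem_insert.mp hw with rfl | hw
        · exact absurd rfl hne
        · have := ht hw
          simp only [Finset.mem_filter] at this
          exact this.2.1
  rw [hset, Finset.card_image_of_injOn, Finset.card_sigma]
  · refine Finset.sum_congr rfl fun v _ => ?_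
    rw [Finset.card_powersetCard, rdeg]
  · rintro ⟨v, t⟩ hp ⟨v', t'⟩ hq h
    simp only [Finset.mem_coe, Finset.mem_sigma, Finset.mem_univ, true_and,
      Finset.mem_powersetCard] at hp hq
    simp only at h
    have hvt : v ∉ t := fun hh => by
      have := hp.1 hh
      simp only [Finset.mem_filter] at this
      exact absurd this.2.2 (lt_irrefl v)
    have hvt' : v' ∉ t' := fun hh => by
      have := hq.1 hh
      simp only [Finset.mem_filter] at this
      exact absurd this.2.2 (lt_irrefl v')
    have hlt : ∀ w ∈ t, v < w := fun w hw => by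
      have := hp.1 hw
      simp only [Finset.mem_filter] at this
      exact this.2.2
    have hlt' : ∀ w ∈ t', v' < w := fun w hw => by
      have := hq.1 hw
      simp only [Finset.mem_filter] at this
      exact this.2.2
    have hvv : v = v' := by
      by_contra hne
      have h1 : v ∈ insert v' t' := by rw [← h]; exact Finset.mem_insert_self v t
      have h2 : v' ∈ insert v t := by rw [h]; exact Finset.mem_insert_self v' t'
      rcases Finset.mem_insert.mp h1 with h1 | h1
      · exact hne h1
      rcases Finset.mem_insert.mp h2 with h2 | h2
      · exact hne h2.symm
      exact absurd (lt_trans (hlt v' h2) (hlt' v h1)) (lt_irrefl v)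
    subst hvv
    have htt : t = t' := by
      have := congrArg (fun s => Finset.erase s v) h
      simpa [Finset.erase_insert hvt, Finset.erase_insert hvt'] using this
    subst htt
    rfl

private def gfun (n a b i : ℕ) : ℕ :=
  if i < a then n - 1 - i else if i = a then b else 0

private lemma qs_rdeg_lt {n a b : ℕ} {v : Fin n} (h : v.val < a) :
    rdeg (quasiStar n a b) v = n - 1 - v.val := by
  classical
  rw [rdeg, ← Fin.card_Ioi v]
  congr 1
  ext j
  simp only [Finset.mem_filter, Finset.mem_univ, true_and, Finset.mem_Ioi,
    quasiStar, SimpleGraph.fromRel_adj]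
  constructor
  · exact fun hh => hh.2
  · intro hj
    have hvj : v.val < j.val := hj
    exact ⟨⟨Fin.ne_of_lt hj, Or.inl ⟨hvj, Or.inl h⟩⟩, hj⟩

private lemma qs_rdeg_eq {n a b : ℕ} {v : Fin n} (h : v.val = a) (hab : a + b < n) :
    rdeg (quasiStar n a b) v = b := by
  classical
  rw [rdeg]
  have : (Finset.univ.filter fun j => (quasiStar n a b).Adj v j ∧ v < j)
      = Finset.Ioc v ⟨a + b, hab⟩ := by
    ext j
    simp only [Finset.mem_filter, Finset.mem_univ, true_and, Finset.mem_Ioc,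
      quasiStar, SimpleGraph.fromRel_adj]
    constructor
    · rintro ⟨⟨hne, hr⟩, hvj⟩
      refine ⟨hvj, ?_⟩
      have hvj' : v.val < j.val := hvj
      rcases hr with ⟨h1, h2⟩ | ⟨h1, _⟩
      · rcases h2 with h2 | ⟨_, h2⟩
        · omega
        · exact Fin.le_def.mpr h2
      · omega
    · rintro ⟨hvj, hj⟩
      have hvj' : v.val < j.val := hvj
      have hj' : j.val ≤ a + b := hj
      exact ⟨⟨Fin.ne_of_lt hvj, Or.inl ⟨hvj', Or.inr ⟨h, hj'⟩⟩⟩, hvj⟩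
  rw [this, Fin.card_Ioc]
  simp [h]

private lemma qs_rdeg_gt {n a b : ℕ} {v : Fin n} (h : a < v.val) :
    rdeg (quasiStar n a b) v = 0 := by
  classical
  rw [rdeg, Finset.card_eq_zero]
  rw [Finset.filter_eq_empty_iff]
  intro j _
  simp only [quasiStar, SimpleGraph.fromRel_adj]
  rintro ⟨⟨hne, hr⟩, hvj⟩
  have hvj' : v.val < j.val := hvj
  rcases hr with ⟨h1, h2⟩ | ⟨h1, h2⟩ <;> omega

private lemma qse_succ {n a : ℕ} (h : a ≤ n) :
    quasiStarEdges (n+1) (a+1) = n + quasiStarEdges n a := by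
  obtain ⟨c, rfl⟩ : ∃ c, n = a + c := ⟨n - a, by omega⟩
  simp only [quasiStarEdges, Nat.choose_succ_succ, Nat.choose_one_right]
  have h1 : a + c + 1 - (a + 1) = c := by omega
  have h2 : a + c - a = c := by omega
  rw [h1, h2]
  ring

private lemma qse_step {n a : ℕ} (h : a < n) :
    quasiStarEdges n (a+1) = quasiStarEdges n a + (n - 1 - a) := by
  obtain ⟨c, rfl⟩ : ∃ c, n = a + 1 + c := ⟨n - a - 1, by omega⟩
  simp only [quasiStarEdges, Nat.choose_succ_succ, Nat.choose_one_right]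
  have h1 : a + 1 + c - (a + 1) = c := by omega
  have h2 : a + 1 + c - a = c + 1 := by omega
  have h3 : a + 1 + c - 1 - a = c := by omega
  rw [h1, h2, h3]
  ring

private lemma qse_self (n : ℕ) : quasiStarEdges n n = n.choose 2 := by
  simp [quasiStarEdges]

private lemma gsum (k : ℕ) (hk : 0 < k) : ∀ n a b, a ≤ n → b ≤ n - 1 - a →
    ∑ i ∈ Finset.range n, (gfun n a b i).choose k
      = Fgr k n (quasiStarEdges n a + b) := by
  intro n
  induction n with
  | zero =>
    intro a b ha hb
    have : a = 0 := by omega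
    subst this
    have : b = 0 := by omega
    subst this
    simp [Fgr, quasiStarEdges]
  | succ n ih =>
    intro a b ha hb
    cases a with
    | zero =>
      have hbn : b ≤ n := by omega
      rw [Finset.sum_range_succ' (fun i => (gfun (n+1) 0 b i).choose k) n]
      have h1 : ∀ i ∈ Finset.range n, (gfun (n+1) 0 b (i+1)).choose k = 0 := by
        intro i _
        simp [gfun, Nat.choose_eq_zero_of_lt hk]
      rw [Finset.sum_congr rfl h1, Finset.sum_const, smul_eq_mul, Nat.mul_zero]
      have h2 : gfun (n+1) 0 b 0 = b := by simp [gfun]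
      rw [h2]
      have h3 : quasiStarEdges (n+1) 0 + b = b := by simp [quasiStarEdges]
      rw [h3]
      simp only [Fgr]
      rw [min_eq_left hbn, Nat.sub_eq_zero_of_le hbn, Fgr_zero k hk]
      omega
    | succ a =>
      have ha' : a ≤ n := by omega
      have hb' : b ≤ n - 1 - a := by omega
      rw [Finset.sum_range_succ' (fun i => (gfun (n+1) (a+1) b i).choose k) n]
      have h1 : ∀ i, gfun (n+1) (a+1) b (i+1) = gfun n a b i := by
        intro i
        simp only [gfun]
        rcases lt_trichotomy i a with h | h | h
        · simp [h, Nat.lt_succ_of_lt, show i + 1 < a + 1 by omega]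
          omega
        · subst h
          simp
        · have h2 : ¬ (i + 1 < a + 1) := by omega
          have h3 : ¬ (i + 1 = a + 1) := by omega
          have h4 : ¬ (i < a) := by omega
          have h5 : ¬ (i = a) := by omega
          simp [h2, h3, h4, h5]
      have h2 : gfun (n+1) (a+1) b 0 = n := by simp [gfun]
      rw [Finset.sum_congr rfl (fun i _ => by rw [h1 i]), h2]
      rw [qse_succ ha']
      have hM : n + quasiStarEdges n a + b = (quasiStarEdges n a + b) + n := by ring
      rw [hM]
      simp only [Fgr]
      rw [min_eq_right (Nat.le_add_left n _), Nat.add_sub_cancel]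
      rw [ih a b ha' hb']
      ring

/-- Among ordered graphs on `[n]` with `m > 0` edges, the quasi-star `S_L(n,m)`
maximizes the number of copies of the ordered left star `S_L(k)`. -/
theorem leftStarCount_le_quasiStar {n m a b k : ℕ} (G : SimpleGraph (Fin n))
    (hm : 0 < m) (hmn : m ≤ n.choose 2) (hG : ecount G = m) (hk : 0 < k)
    (han : a ≤ n) (ha : quasiStarEdges n a ≤ m)
    (hamax : ∀ a' ≤ n, quasiStarEdges n a' ≤ m → a' ≤ a)
    (hb : b = m - quasiStarEdges n a) :
    leftStarCount G k ≤ leftStarCount (quasiStar n a b) k := by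
  classical
  have hfm : quasiStarEdges n a + b = m := by omega
  have hbound : b ≤ n - 1 - a ∧ (a < n → a + b < n) := by
    rcases eq_or_lt_of_le han with rfl | hlt
    · have hqs := qse_self a
      have hb0 : b = 0 := by omega
      constructor
      · omega
      · omega
    · have hstep := qse_step hlt
      have hnot : ¬ (quasiStarEdges n (a+1) ≤ m) := fun hc =>
        absurd (hamax (a+1) (by omega) hc) (by omega)
      have hblt : b < n - 1 - a := by omega
      exact ⟨le_of_lt hblt, fun _ => by omega⟩
  -- pack the right-degrees of G into a function on ℕ
  set d : ℕ → ℕ := fun i => if h : i < n then rdeg G ⟨i, h⟩ else 0 with hdd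
  have hdval : ∀ v : Fin n, d v.val = rdeg G v := by
    intro v
    simp [hdd, v.isLt]
  have hcap : ∀ i, i < n → d i ≤ n - 1 - i := by
    intro i hi
    simp only [hdd, dif_pos hi]
    exact rdeg_le G ⟨i, hi⟩
  have hsum1 : ∑ v : Fin n, (rdeg G v).choose k
      = ∑ i ∈ Finset.range n, (d i).choose k := by
    rw [← Fin.sum_univ_eq_sum_range (fun i => (d i).choose k) n]
    exact Finset.sum_congr rfl fun v _ => by rw [hdval v]
  have hsum2 : ∑ i ∈ Finset.range n, d i = m := by
    rw [← Fin.sum_univ_eq_sum_range d n]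
    rw [Finset.sum_congr rfl fun v _ => hdval v]
    rw [← ecount_eq G, hG]
  have hqsr : ∀ v : Fin n, rdeg (quasiStar n a b) v = gfun n a b v.val := by
    intro v
    rcases lt_trichotomy v.val a with h | h | h
    · rw [qs_rdeg_lt h, gfun, if_pos h]
    · have hlt : a < n := h ▸ v.isLt
      rw [qs_rdeg_eq h (hbound.2 hlt), gfun, if_neg (by omega), if_pos h]
    · rw [qs_rdeg_gt h, gfun, if_neg (by omega), if_neg (by omega)]
  calc leftStarCount G k
      = ∑ i ∈ Finset.range n, (d i).choose k := by rw [star_eq, hsum1]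
    _ ≤ Fgr k n (∑ i ∈ Finset.range n, d i) := main_lem k hk n d hcap
    _ = Fgr k n (quasiStarEdges n a + b) := by rw [hsum2, hfm]
    _ = ∑ i ∈ Finset.range n, (gfun n a b i).choose k :=
        (gsum k hk n a b han hbound.1).symm
    _ = ∑ v : Fin n, (rdeg (quasiStar n a b) v).choose k := by
        rw [← Fin.sum_univ_eq_sum_range (fun i => (gfun n a b i).choose k) n]
        exact Finset.sum_congr rfl fun v _ => by rw [hqsr v]
    _ = leftStarCount (quasiStar n a b) k := (star_eq _ k).symm
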